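/- With the notation of the TV theorem and r > 1, the function q_TV (given by q_TV(x_1)=p(x_1)+δ, q_TV(x_i)=p(x_i) for 2≤i≤r-1, q_TV(x_r)=∑_{i=r}^n p(x_i)-δ, q_TV(x_i)=0 for i>r) is a probability mass function satisfying d_TV(q_TV,p) = δ. -/

import Mathlib

open Finset

theorem split_sum_Iio_Ici (n : ℕ) (r : Fin n) (p : Fin n → ℝ) :
    ∑ i ∈ Iio r, p i + ∑ i ∈ Ici r, p i = ∑ i, p i := by
  rw [← Finset.sum_union (by rw [Finset.disjoint_left]; intro a; simp)]
  congr 1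
  ext i; simp [lt_or_ge]

/-- For `r > 1`, the candidate `q_TV` is a probability mass function whose total
variation distance to `p` is exactly `δ`. -/
theorem qTV_is_pmf_with_tv_eq_delta
    (n : ℕ) (hn : 0 < n) (p : Fin n → ℝ)
    (hp0 : ∀ i, 0 ≤ p i) (hp1 : ∑ i, p i = 1)
    (δ : ℝ) (hδ0 : 0 ≤ δ) (hδ1 : δ ≤ 1)
    (r : Fin n) (hr1 : (⟨0, hn⟩ : Fin n) < r)
    (hr : ∑ i ∈ Finset.Ioi r, p i ≤ δ)
    (hr' : δ < ∑ i ∈ Finset.Ici r, p i)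
    (qTV : Fin n → ℝ)
    (hqTV : qTV = fun i =>
      if i = (⟨0, hn⟩ : Fin n) then p i + δ
      else if i < r then p i
      else if i = r then (∑ j ∈ Finset.Ici r, p j) - δ
      else 0) :
    (∀ i, 0 ≤ qTV i) ∧ ∑ i, qTV i = 1 ∧
      (1 / 2) * ∑ i, |qTV i - p i| = δ := by
  subst hqTV
  set z : Fin n := ⟨0, hn⟩ with hz
  have hIci : ∑ i ∈ Ici r, p i = p r + ∑ i ∈ Ioi r, p i := by
    rw [Finset.Ici_eq_cons_Ioi, Finset.sum_cons]
  have hzr : z ∈ Iio r := Finset.mem_Iio.mpr hr1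
  have hrr : r ∉ Ioi r := by simp
  -- values on the pieces
  have hval_mid : ∀ i ∈ (Iio r).erase z,
      (if i = z then p i + δ else if i < r then p i else if i = r then
        (∑ j ∈ Finset.Ici r, p j) - δ else 0) = p i := by
    intro i hi
    rw [Finset.mem_erase, Finset.mem_Iio] at hi
    rw [if_neg hi.1, if_pos hi.2]
  have hval_r : (if r = z then p r + δ else if r < r then p r else if r = r then
        (∑ j ∈ Finset.Ici r, p j) - δ else 0) = (∑ j ∈ Finset.Ici r, p j) - δ := by
    rw [if_neg (by exact fun h => absurd h (ne_of_gt hr1)), if_neg (lt_irrefl r), if_pos rfl]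
  have hval_top : ∀ i ∈ Ioi r,
      (if i = z then p i + δ else if i < r then p i else if i = r then
        (∑ j ∈ Finset.Ici r, p j) - δ else 0) = 0 := by
    intro i hi
    rw [Finset.mem_Ioi] at hi
    rw [if_neg (by exact fun h => absurd (h ▸ hi) (not_lt.mpr (le_of_lt hr1))),
      if_neg (not_lt.mpr (le_of_lt hi)), if_neg (ne_of_gt hi)]
  -- generic sum computation
  have hsum : ∀ f : Fin n → ℝ,
      ∑ i, f i = f z + ∑ i ∈ (Iio r).erase z, f i + (f r + ∑ i ∈ Ioi r, f i) := by
    intro f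
    rw [← split_sum_Iio_Ici n r f, ← Finset.add_sum_erase _ f hzr,
      Finset.Ici_eq_cons_Ioi, Finset.sum_cons]
  refine ⟨?_, ?_, ?_⟩
  · intro i
    beta_reduce
    by_cases h0 : i = z
    · rw [h0, if_pos rfl]; have := hp0 z; linarith
    · rw [if_neg h0]
      by_cases h1 : i < r
      · rw [if_pos h1]; exact hp0 i
      · rw [if_neg h1]
        by_cases h2 : i = r
        · rw [if_pos h2]; linarith
        · rw [if_neg h2]
  · rw [hsum]
    beta_reduce
    rw [if_pos rfl, Finset.sum_congr rfl hval_mid, hval_r, Finset.sum_congr rfl hval_top]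
    have h2 : ∑ i ∈ Iio r, p i = p z + ∑ i ∈ (Iio r).erase z, p i :=
      (Finset.add_sum_erase _ p hzr).symm
    have := split_sum_Iio_Ici n r p
    simp only [Finset.sum_const_zero]
    linarith [hp1]
  · rw [hsum]
    beta_reduce
    rw [if_pos rfl]
    have e1 : ∑ i ∈ (Iio r).erase z,
        |(if i = z then p i + δ else if i < r then p i else if i = r then
          (∑ j ∈ Finset.Ici r, p j) - δ else 0) - p i| = 0 := by
      apply Finset.sum_eq_zero
      intro i hi
      rw [hval_mid i hi]; simp
    have e3 : ∑ i ∈ Ioi r,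
        |(if i = z then p i + δ else if i < r then p i else if i = r then
          (∑ j ∈ Finset.Ici r, p j) - δ else 0) - p i| = ∑ i ∈ Ioi r, p i := by
      apply Finset.sum_congr rfl
      intro i hi
      rw [hval_top i hi]
      simp [abs_of_nonneg (hp0 i)]
    rw [e1, e3, hval_r]
    have : |p z + δ - p z| = δ := by
      rw [show p z + δ - p z = δ by ring, abs_of_nonneg hδ0]
    rw [this]
    have h4 : ∑ j ∈ Ici r, p j - δ - p r = ∑ i ∈ Ioi r, p i - δ := by
      rw [hIci]; ring
    rw [h4, abs_of_nonpos (by linarith)]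
    ring
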